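/- arXiv:1101.1426 — 10 statements merged into one kernel-verified Lean document; each statement's English description precedes it below -/
import Mathlib

section
/- Let P₀, …, Pₙ be the vertices of a regular n-dimensional simplex in ℝⁿ (all pairwise distances equal and positive). Then for any indices i ≠ j and k ≠ l, the angle between the lines P_iP_j and P_kP_l (i.e., the angle between the vectors P_i − P_j and P_k − P_l, taken in [0°, 90°] by identifying an angle with its supplement) is either 0°, 60°, or 90°. -/
open InnerProductGeometry Real

theorem stmt0 (n : ℕ) (P : Fin (n + 1) → EuclideanSpace ℝ (Fin n)) (d : ℝ) (hd : 0 < d)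
    (hreg : ∀ i j : Fin (n + 1), i ≠ j → dist (P i) (P j) = d)
    (i j k l : Fin (n + 1)) (hij : i ≠ j) (hkl : k ≠ l) :
    min (angle (P i - P j) (P k - P l)) (π - angle (P i - P j) (P k - P l))
      ∈ ({0, π / 3, π / 2} : Set ℝ) := by
  have hd0 : d ≠ 0 := hd.ne'
  have hnorm : ∀ a b : Fin (n+1), a ≠ b → ‖P a - P b‖ = d := fun a b h => by
    rw [← dist_eq_norm]; exact hreg a b h
  have hdsq : ∀ a b : Fin (n+1), ‖P a - P b‖^2 = if a = b then 0 else d^2 := fun a b => by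
    split
    · simp [*]
    · rw [hnorm a b ‹_›]
  have hinner : (inner ℝ (P i - P j) (P k - P l) : ℝ) =
      (‖P i - P l‖^2 + ‖P j - P k‖^2 - ‖P i - P k‖^2 - ‖P j - P l‖^2)/2 := by
    simp only [@norm_sub_sq_real, inner_sub_left, inner_sub_right]
    ring
  have hval : (inner ℝ (P i - P j) (P k - P l) : ℝ) = d^2 ∨
      (inner ℝ (P i - P j) (P k - P l) : ℝ) = d^2/2 ∨
      (inner ℝ (P i - P j) (P k - P l) : ℝ) = 0 ∨
      (inner ℝ (P i - P j) (P k - P l) : ℝ) = -(d^2/2) ∨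
      (inner ℝ (P i - P j) (P k - P l) : ℝ) = -d^2 := by
    rw [hinner, hdsq, hdsq, hdsq, hdsq]
    clear hinner hdsq hnorm hreg
    rcases eq_or_ne i k with hik | hik <;> rcases eq_or_ne i l with hil | hil <;>
      rcases eq_or_ne j k with hjk | hjk <;> rcases eq_or_ne j l with hjl | hjl <;>
      simp_all <;> ring_nf <;> tauto
  have hu : ‖P i - P j‖ = d := hnorm i j hij
  have hv : ‖P k - P l‖ = d := hnorm k l hkl
  have hangle : angle (P i - P j) (P k - P l) =
      Real.arccos ((inner ℝ (P i - P j) (P k - P l) : ℝ) / (d * d)) := by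
    rw [InnerProductGeometry.angle, hu, hv]
  have pi3 : Real.arccos (1/2) = π/3 := by
    rw [← Real.cos_pi_div_three, Real.arccos_cos (by positivity) (by linarith [pi_pos])]
  have h5 : angle (P i - P j) (P k - P l) = 0 ∨ angle (P i - P j) (P k - P l) = π/3 ∨
      angle (P i - P j) (P k - P l) = π/2 ∨ angle (P i - P j) (P k - P l) = 2*π/3 ∨
      angle (P i - P j) (P k - P l) = π := by
    rcases hval with h | h | h | h | h <;> rw [hangle, h]
    · left; rw [show d^2/(d*d) = 1 by field_simp, Real.arccos_one]
    · right; left; rw [show d^2/2/(d*d) = 1/2 by field_simp, pi3]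
    · right; right; left; rw [zero_div, Real.arccos_zero]
    · right; right; right; left
      rw [show -(d^2/2)/(d*d) = -(1/2) by field_simp, Real.arccos_neg, pi3]; ring
    · right; right; right; right
      rw [show -d^2/(d*d) = -1 by field_simp, Real.arccos_neg_one]
  have hpi := pi_pos
  rcases h5 with h | h | h | h | h <;> rw [h] <;>
    simp only [Set.mem_insert_iff, Set.mem_singleton_iff]
  · left; rw [min_eq_left (by linarith)]
  · right; left; rw [min_eq_left (by linarith)]
  · right; right; rw [min_eq_right (by linarith)]; linarith
  · right; left; rw [min_eq_right (by linarith)]; linarith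
  · left; rw [min_eq_right (by linarith)]; linarith
end

section
/- Let K ⊂ ℝⁿ be a nonempty compact set equal to the union S₀(K) ∪ … ∪ S_m(K), where each S_i is a homothety of ℝⁿ (a map x ↦ c_i + r_i(x − c_i) with ratio 0 < |r_i| < 1). Then for any distinct points x₀, x₁ ∈ K there exist indices i ≠ j and points y₀ ∈ S_i(K), y₁ ∈ S_j(K) such that y₀ − y₁ is a nonzero scalar multiple of x₀ − x₁. -/
/-- A homothety of ℝⁿ with center `c` and ratio `r`. -/
def IsHomothety {n : ℕ} (S : EuclideanSpace ℝ (Fin n) → EuclideanSpace ℝ (Fin n)) (r : ℝ) : Prop :=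
  ∃ c : EuclideanSpace ℝ (Fin n), ∀ x, S x = c + r • (x - c)

theorem stmt2 (n m : ℕ) (K : Set (EuclideanSpace ℝ (Fin n)))
    (hne : K.Nonempty) (hK : IsCompact K)
    (S : Fin (m + 1) → EuclideanSpace ℝ (Fin n) → EuclideanSpace ℝ (Fin n))
    (r : Fin (m + 1) → ℝ)
    (hhom : ∀ i, IsHomothety (S i) (r i))
    (hr : ∀ i, 0 < |r i| ∧ |r i| < 1)
    (hunion : K = ⋃ i, S i '' K)
    (x₀ x₁ : EuclideanSpace ℝ (Fin n)) (hx₀ : x₀ ∈ K) (hx₁ : x₁ ∈ K) (hne' : x₀ ≠ x₁) :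
    ∃ i j : Fin (m + 1), i ≠ j ∧ ∃ y₀ ∈ S i '' K, ∃ y₁ ∈ S j '' K,
      ∃ t : ℝ, t ≠ 0 ∧ y₀ - y₁ = t • (x₀ - x₁) := by
  set ρ : ℝ := Finset.univ.sup' ⟨0, Finset.mem_univ 0⟩ (fun i => |r i|) with hρdef
  have hle : ∀ i, |r i| ≤ ρ := fun i => Finset.le_sup' (fun i => |r i|) (Finset.mem_univ i)
  have hρ0 : 0 < ρ := lt_of_lt_of_le (hr 0).1 (hle 0)
  have hρ1 : ρ < 1 := by
    rw [hρdef]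
    exact (Finset.sup'_lt_iff _).2 fun i _ => (hr i).2
  have key : ∀ N : ℕ, ∀ x y, x ∈ K → y ∈ K → Metric.diam K * ρ ^ N < dist x y →
      ∃ i j : Fin (m + 1), i ≠ j ∧ ∃ y₀ ∈ S i '' K, ∃ y₁ ∈ S j '' K,
        ∃ t : ℝ, t ≠ 0 ∧ y₀ - y₁ = t • (x - y) := by
    intro N
    induction N with
    | zero =>
      intro x y hx hy hd
      simp only [pow_zero, mul_one] at hd
      exact absurd (Metric.dist_le_diam_of_mem hK.isBounded hx hy) (not_le.mpr hd)
    | succ N ih =>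
      intro x y hx hy hd
      have hx' := hx; have hy' := hy
      rw [hunion, Set.mem_iUnion] at hx' hy'
      obtain ⟨i, z₀, hz₀K, hz₀⟩ := hx'
      obtain ⟨j, z₁, hz₁K, hz₁⟩ := hy'
      by_cases hij : i = j
      · subst hij
        obtain ⟨c, hc⟩ := hhom i
        have hxy : x - y = r i • (z₀ - z₁) := by
          rw [← hz₀, ← hz₁, hc, hc]; module
        have hdist : dist x y = |r i| * dist z₀ z₁ := by
          rw [dist_eq_norm, dist_eq_norm, hxy, norm_smul, Real.norm_eq_abs]
        have hri : 0 < |r i| := (hr i).1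
        have hd' : Metric.diam K * ρ ^ N < dist z₀ z₁ := by
          have h1 : dist x y ≤ ρ * dist z₀ z₁ := by
            rw [hdist]
            exact mul_le_mul_of_nonneg_right (hle i) dist_nonneg
          have h2 : Metric.diam K * ρ ^ (N + 1) = ρ * (Metric.diam K * ρ ^ N) := by ring
          rw [h2] at hd
          have := lt_of_lt_of_le hd h1
          exact lt_of_mul_lt_mul_left this hρ0.le
        obtain ⟨a, b, hab, y₀, hy₀, y₁, hy₁, t, ht, heq⟩ := ih z₀ z₁ hz₀K hz₁K hd'
        refine ⟨a, b, hab, y₀, hy₀, y₁, hy₁, t / r i, ?_, ?_⟩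
        · exact div_ne_zero ht (fun h => by simp [h] at hri)
        · have hri' : r i ≠ 0 := fun h => by simp [h] at hri
          rw [heq, hxy, smul_smul, div_mul_cancel₀ _ hri']
      · exact ⟨i, j, hij, x, ⟨z₀, hz₀K, hz₀⟩, y, ⟨z₁, hz₁K, hz₁⟩, 1, one_ne_zero, (one_smul _ _).symm⟩
  have hdpos : 0 < dist x₀ x₁ := dist_pos.mpr hne'
  have hdiam : 0 < Metric.diam K :=
    lt_of_lt_of_le hdpos (Metric.dist_le_diam_of_mem hK.isBounded hx₀ hx₁)
  obtain ⟨N, hN⟩ := exists_pow_lt_of_lt_one (div_pos hdpos hdiam) hρ1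
  refine key N x₀ x₁ hx₀ hx₁ ?_
  calc Metric.diam K * ρ ^ N < Metric.diam K * (dist x₀ x₁ / Metric.diam K) :=
        mul_lt_mul_of_pos_left hN hdiam
    _ = dist x₀ x₁ := by field_simp
end

section
/- Let f and g be homotheties of ℝⁿ with the same positive ratio product in both orders, and let P and Q be the fixed points of f∘g and g∘f respectively. If P ≠ Q and x, y are points with x − y nonzero and perpendicular to P − Q, then the four points f(g(x)), f(g(y)), g(f(y)), g(f(x)) form a (possibly degenerate only if x = y) rectangle; in particular, opposite sides are equal and parallel and adjacent sides are perpendicular. -/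
theorem stmt3 (n : ℕ) (f g : EuclideanSpace ℝ (Fin n) → EuclideanSpace ℝ (Fin n))
    (rf rg : ℝ) (hf : IsHomothety f rf) (hg : IsHomothety g rg)
    (hpos : 0 < rf * rg) (hne1 : rf * rg ≠ 1)
    (P Q : EuclideanSpace ℝ (Fin n)) (hP : f (g P) = P) (hQ : g (f Q) = Q) (hPQ : P ≠ Q)
    (x y : EuclideanSpace ℝ (Fin n)) (hxy : x ≠ y)
    (hperp : inner ℝ (x - y) (P - Q) = (0 : ℝ)) :
    f (g x) - f (g y) = g (f x) - g (f y) ∧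
      inner ℝ (f (g x) - f (g y)) (f (g y) - g (f y)) = (0 : ℝ) ∧
      f (g x) ≠ f (g y) ∧ f (g y) ≠ g (f y) := by
  obtain ⟨cf, hcf⟩ := hf
  obtain ⟨cg, hcg⟩ := hg
  set k := rf * rg with hk
  have key1 : ∀ a b, f (g a) - f (g b) = k • (a - b) := by
    intro a b
    simp only [hcf, hcg, hk]
    module
  have key2 : ∀ a b, g (f a) - g (f b) = k • (a - b) := by
    intro a b
    simp only [hcf, hcg, hk]
    module
  have hfg : ∀ a, f (g a) = P + k • (a - P) := by
    intro a
    have h := key1 a P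
    rw [hP] at h
    have := sub_eq_iff_eq_add.mp h
    rw [this]; abel
  have hgf : ∀ a, g (f a) = Q + k • (a - Q) := by
    intro a
    have h := key2 a Q
    rw [hQ] at h
    have := sub_eq_iff_eq_add.mp h
    rw [this]; abel
  have hside : f (g y) - g (f y) = (1 - k) • (P - Q) := by
    rw [hfg y, hgf y]; module
  have hk0 : k ≠ 0 := ne_of_gt hpos
  have hxy' : x - y ≠ 0 := sub_ne_zero.mpr hxy
  have hPQ' : P - Q ≠ 0 := sub_ne_zero.mpr hPQ
  refine ⟨by rw [key1, key2], ?_, ?_, ?_⟩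
  · rw [key1, hside, real_inner_smul_left, real_inner_smul_right, hperp]
    ring
  · intro h
    have := key1 x y
    rw [h, sub_self] at this
    exact hxy' (by simpa [hk0, smul_eq_zero] using this.symm)
  · intro h
    rw [← sub_eq_zero, hside, smul_eq_zero] at h
    rcases h with h | h
    · exact hne1 (by linarith [sub_eq_zero.mp h])
    · exact hPQ' h
end

section
/- Fewer than continuum many proper algebraic subsets of ℝⁿ cannot cover a Borel (or Lebesgue measurable) set of positive n-dimensional Lebesgue measure. Equivalently: if 𝒜 is a family of proper algebraic subsets of ℝⁿ with |𝒜| < 𝔠 and B ⊆ ⋃𝒜 is measurable, then B has Lebesgue measure zero. -/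
open MeasureTheory

/-- A proper algebraic subset of ℝⁿ: the zero set of a nonzero polynomial. -/
def IsProperAlgebraic {n : ℕ} (A : Set (Fin n → ℝ)) : Prop :=
  ∃ p : MvPolynomial (Fin n) ℝ, p ≠ 0 ∧ A = {x | MvPolynomial.eval x p = 0}

lemma null_of_mk_lt_continuum {T : Set ℝ} (hT : MeasurableSet T)
    (h : Cardinal.mk T < Cardinal.continuum) : volume T = 0 := by
  by_contra hpos
  obtain ⟨K, hKT, hKc, hKpos⟩ := hT.exists_lt_isCompact (pos_iff_ne_zero.mpr hpos : (0:ENNReal) < volume T)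
  have hKcount : ¬ K.Countable := fun hc => hKpos.ne' (hc.measure_zero volume)
  obtain ⟨f, hfr, _, hfi⟩ := hKc.isClosed.exists_nat_bool_injection_of_not_countable hKcount
  have : Cardinal.continuum ≤ Cardinal.mk T := by
    have : Function.Injective (fun x : ℕ → Bool => (⟨f x, hKT (hfr ⟨x, rfl⟩)⟩ : T)) := by
      intro a b hab
      exact hfi (congrArg Subtype.val hab)
    simpa using Cardinal.mk_le_of_injective this
  exact absurd h (not_lt.mpr this)

theorem stmt4 (n : ℕ) (ι : Type) (hcard : Cardinal.mk ι < Cardinal.continuum)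
    (A : ι → Set (Fin n → ℝ)) (hA : ∀ i, IsProperAlgebraic (A i))
    (B : Set (Fin n → ℝ)) (hB : B ⊆ ⋃ i, A i) (hmeas : MeasurableSet B) :
    volume B = 0 := by
  induction n generalizing ι with
  | zero =>
    have hAe : ∀ i, A i = ∅ := by
      intro i
      obtain ⟨p, hp, hAp⟩ := hA i
      obtain ⟨c, rfl⟩ := MvPolynomial.C_surjective (Fin 0) p
      have hc : c ≠ 0 := fun h => hp (by simp [h])
      rw [hAp]
      ext x
      simp [hc]
    refine measure_mono_null hB ?_
    simp [hAe]
  | succ n ih =>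
    by_contra hpos
    choose p hp hAp using hA
    set P : ι → Polynomial (MvPolynomial (Fin n) ℝ) :=
      fun i => MvPolynomial.finSuccEquiv ℝ n (p i) with hPdef
    have hPne : ∀ i, P i ≠ 0 := by
      intro i h
      exact hp i ((MvPolynomial.finSuccEquiv ℝ n).injective (h.trans (map_zero _).symm))
    have hk : ∀ i, ∃ m, (P i).coeff m ≠ 0 := by
      intro i
      obtain ⟨m, hm⟩ := Polynomial.support_nonempty.mpr (hPne i)
      exact ⟨m, Polynomial.mem_support_iff.mp hm⟩
    choose k hkne using hk
    set A' : ι → Set (Fin n → ℝ) :=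
      fun i => {y | MvPolynomial.eval y ((P i).coeff (k i)) = 0} with hA'def
    set e := MeasurableEquiv.piFinSuccAbove (fun _ : Fin (n+1) => ℝ) 0 with hedef
    have hvol : MeasurePreserving e := volume_preserving_piFinSuccAbove _ 0
    set B₂ : Set ((Fin n → ℝ) × ℝ) := Prod.swap ⁻¹' (e.symm ⁻¹' B) with hB₂def
    have hB₁meas : MeasurableSet (e.symm ⁻¹' B) := e.symm.measurable hmeas
    have hB₂meas : MeasurableSet B₂ := measurable_swap hB₁meas
    have hB₂vol : volume B₂ ≠ 0 := by
      have h1 : volume (e.symm ⁻¹' B) = volume B :=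
        (MeasurePreserving.symm e hvol).measure_preimage hmeas.nullMeasurableSet
      have h2 : volume B₂ = volume (e.symm ⁻¹' B) := by
        rw [hB₂def]
        exact (Measure.measurePreserving_swap).measure_preimage hB₁meas.nullMeasurableSet
      rw [h2, h1]; exact hpos
    have hmem : ∀ (t : ℝ) (y : Fin n → ℝ), (y, t) ∈ B₂ ↔ Fin.cons t y ∈ B := by
      intro t y
      have hsymm : e.symm (t, y) = Fin.cons t y := by
        simp [hedef, MeasurableEquiv.piFinSuccAbove_symm_apply, Fin.insertNth_zero', Fin.consEquiv]
      simp [hB₂def, hsymm]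
    set f : (Fin n → ℝ) → ENNReal := fun y => volume (Prod.mk y ⁻¹' B₂) with hfdef
    have hfmeas : Measurable f := measurable_measure_prodMk_left hB₂meas
    set S : Set (Fin n → ℝ) := {y | f y ≠ 0} with hSdef
    have hSmeas : MeasurableSet S := hfmeas (measurableSet_singleton 0).compl
    have hSne : volume S ≠ 0 := by
      intro h0
      apply hB₂vol
      rw [Measure.volume_eq_prod, Measure.measure_prod_null hB₂meas]
      rw [Filter.EventuallyEq, MeasureTheory.ae_iff]
      simpa using h0
    by_cases hSsub : S ⊆ ⋃ i, A' i
    · exact hSne (ih ι hcard A' (fun i => ⟨(P i).coeff (k i), hkne i, rfl⟩) S hSsub hSmeas)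
    · obtain ⟨y, hyS, hyA⟩ := Set.not_subset.mp hSsub
      set T : Set ℝ := Prod.mk y ⁻¹' B₂ with hTdef
      have hTmeas : MeasurableSet T := measurable_prodMk_left hB₂meas
      have hTne : volume T ≠ 0 := hyS
      set q : ι → Polynomial ℝ :=
        fun i => Polynomial.map (MvPolynomial.eval y) (P i) with hqdef
      have hqne : ∀ i, q i ≠ 0 := by
        intro i h
        apply hyA
        refine Set.mem_iUnion.mpr ⟨i, ?_⟩
        have := congrArg (fun r => Polynomial.coeff r (k i)) h
        simpa [hqdef, Polynomial.coeff_map, hA'def] using this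
      have hTsub : T ⊆ ⋃ i, {t : ℝ | Polynomial.IsRoot (q i) t} := by
        intro t ht
        have hcons : Fin.cons t y ∈ B := (hmem t y).mp ht
        obtain ⟨i, hi⟩ := Set.mem_iUnion.mp (hB hcons)
        refine Set.mem_iUnion.mpr ⟨i, ?_⟩
        have : MvPolynomial.eval (Fin.cons t y) (p i) = 0 := by
          rw [hAp i] at hi; exact hi
        rw [MvPolynomial.eval_eq_eval_mv_eval'] at this
        exact this
      have hTcard : Cardinal.mk T < Cardinal.continuum := by
        calc Cardinal.mk T ≤ Cardinal.mk (⋃ i, {t : ℝ | Polynomial.IsRoot (q i) t}) :=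
              Cardinal.mk_le_mk_of_subset hTsub
          _ ≤ Cardinal.mk ι * ⨆ i, Cardinal.mk {t : ℝ | Polynomial.IsRoot (q i) t} :=
              Cardinal.mk_iUnion_le _
          _ ≤ Cardinal.mk ι * Cardinal.aleph0 := by
              refine mul_le_mul_right (ciSup_le' fun i => ?_) _
              exact ((Polynomial.finite_setOf_isRoot (hqne i)).lt_aleph0).le
          _ < Cardinal.continuum :=
              Cardinal.mul_lt_of_lt Cardinal.aleph0_le_continuum hcard
                Cardinal.aleph0_lt_continuum
      exact hTne (null_of_mk_lt_continuum hTmeas hTcard)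
end

section
/- Let A ⊂ ℝⁿ be a compact set with ℋˢ(A) > 0 for some s > 0. Then there exists a closed ball B such that the s-dimensional Hausdorff content of A ∩ B satisfies ℋˢ_∞(A ∩ B) ≥ c · diam(B)ˢ, where c = 2^{−2−s}. -/
open MeasureTheory ENNReal

/-- The `s`-dimensional Hausdorff content. -/
noncomputable def hContent {X : Type*} [EMetricSpace X] (s : ℝ) (A : Set X) : ℝ≥0∞ :=
  ⨅ (U : ℕ → Set X) (_ : A ⊆ ⋃ i, U i), ∑' i, EMetric.diam (U i) ^ s

section aux

variable {X : Type*} [EMetricSpace X] {s : ℝ}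

/-- The Hausdorff content as an outer measure. -/
noncomputable def hCOM (s : ℝ) (hs : 0 < s) (X : Type*) [EMetricSpace X] : OuterMeasure X :=
  OuterMeasure.ofFunction (fun U => EMetric.diam U ^ s)
    (by simp [EMetric.diam, ENNReal.zero_rpow_of_pos hs])

lemma hContent_eq (hs : 0 < s) (A : Set X) : hContent s A = hCOM s hs X A := by
  rw [hCOM, OuterMeasure.ofFunction_apply]
  rfl

lemma hContent_le_diam_rpow (hs : 0 < s) (A : Set X) :
    hContent s A ≤ EMetric.diam A ^ s := by
  rw [hContent_eq hs]
  exact OuterMeasure.ofFunction_le _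

lemma hContent_mono (hs : 0 < s) {A B : Set X} (h : A ⊆ B) :
    hContent s A ≤ hContent s B := by
  rw [hContent_eq hs, hContent_eq hs]
  exact measure_mono h

lemma hContent_iUnion_le (hs : 0 < s) (S : ℕ → Set X) :
    hContent s (⋃ i, S i) ≤ ∑' i, hContent s (S i) := by
  simp only [hContent_eq hs]
  exact measure_iUnion_le S

lemma hContent_pos [MeasurableSpace X] [BorelSpace X] (hs : 0 < s) {A : Set X}
    (h : 0 < μH[s] A) :
    0 < hContent s A := by
  rcases eq_zero_or_pos (hContent s A) with h0 | h0
  · exfalso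
    refine h.ne' (le_antisymm ?_ (zero_le))
    rw [MeasureTheory.Measure.hausdorffMeasure_apply]
    refine iSup₂_le fun r hr => ?_
    have key : ∀ ε : ℝ≥0∞, 0 < ε → ε ≤ r ^ s →
        (⨅ (t : ℕ → Set X) (_ : A ⊆ ⋃ n, t n) (_ : ∀ n, EMetric.diam (t n) ≤ r),
          ∑' n, ⨆ _ : (t n).Nonempty, EMetric.diam (t n) ^ s) ≤ ε := by
      intro ε hε hεr
      have : hContent s A < ε := h0 ▸ hε
      rw [hContent] at this
      rw [iInf_lt_iff] at this
      obtain ⟨t, ht⟩ := this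
      rw [iInf_lt_iff] at ht
      obtain ⟨hcov, hsum⟩ := ht
      have hdiam : ∀ n, EMetric.diam (t n) ≤ r := by
        intro n
        rw [← ENNReal.rpow_le_rpow_iff hs]
        exact le_trans (le_trans (ENNReal.le_tsum n) hsum.le) hεr
      have htail : (∑' n, ⨆ _ : (t n).Nonempty, EMetric.diam (t n) ^ s) ≤ ε := by
        refine le_trans (ENNReal.tsum_le_tsum fun n => ?_) hsum.le
        exact iSup_le fun _ => le_rfl
      exact le_trans (iInf₂_le_of_le t hcov (iInf_le_of_le hdiam le_rfl)) htail
    have hrs : 0 < r ^ s := by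
      rcases eq_or_ne r ⊤ with rfl | hrt
      · simp [ENNReal.top_rpow_of_pos hs]
      · exact ENNReal.rpow_pos hr hrt
    refine ENNReal.le_of_forall_pos_le_add fun ε hε _ => ?_
    rw [zero_add]
    calc _ ≤ min (ε : ℝ≥0∞) (r ^ s) :=
          key _ (lt_min (ENNReal.coe_pos.mpr hε) hrs) (min_le_right _ _)
      _ ≤ ε := min_le_left _ _
  · exact h0

end aux

theorem stmt7 (n : ℕ) (s : ℝ) (hs : 0 < s) (A : Set (EuclideanSpace ℝ (Fin n)))
    (hA : IsCompact A) (hpos : 0 < μH[s] A) :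
    ∃ (x : EuclideanSpace ℝ (Fin n)) (r : ℝ), 0 < r ∧
      ENNReal.ofReal (2 ^ (-2 - s)) * EMetric.diam (Metric.closedBall x r) ^ s ≤
        hContent s (A ∩ Metric.closedBall x r) := by
  by_contra hcon
  push_neg at hcon
  set c : ℝ≥0∞ := ENNReal.ofReal (2 ^ (-2 - s)) with hc
  have hc_eq : c = (2 : ℝ≥0∞) ^ (-2 - s) := by
    rw [hc, ← ENNReal.ofReal_rpow_of_pos (by norm_num), ENNReal.ofReal_ofNat]
  set H := hContent s A with hH
  have hHpos : 0 < H := hContent_pos hs hpos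
  have hHne : H ≠ ⊤ := by
    refine ne_top_of_le_ne_top ?_ (hContent_le_diam_rpow hs A)
    exact (ENNReal.rpow_lt_top_of_nonneg hs.le hA.isBounded.ediam_ne_top).ne
  -- get a cover with sum < 2 * H
  have hlt : H < 2 * H := by
    conv_lhs => rw [← one_mul H]
    exact ENNReal.mul_lt_mul_left hHpos.ne' hHne one_lt_two
  have : hContent s A < 2 * H := hlt
  rw [hContent, iInf_lt_iff] at this
  obtain ⟨t, ht⟩ := this
  rw [iInf_lt_iff] at ht
  obtain ⟨hcov, hsum⟩ := ht
  -- bound the content of each piece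
  have hpiece : ∀ i, hContent s (A ∩ t i) ≤ c * (2 * EMetric.diam (t i)) ^ s := by
    intro i
    rcases Set.eq_empty_or_nonempty (A ∩ t i) with he | ⟨x, hx⟩
    · rw [he, hContent_eq hs]
      simp
    rcases eq_or_ne (EMetric.diam (t i)) 0 with hd0 | hd0
    · calc hContent s (A ∩ t i) ≤ EMetric.diam (A ∩ t i) ^ s :=
            hContent_le_diam_rpow hs _
        _ ≤ EMetric.diam (t i) ^ s :=
            ENNReal.rpow_le_rpow (EMetric.diam_mono Set.inter_subset_right) hs.le
        _ = 0 := by rw [hd0, ENNReal.zero_rpow_of_pos hs]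
        _ ≤ _ := zero_le
    have hdne : EMetric.diam (t i) ≠ ⊤ := by
      intro htop
      refine hsum.ne_top (eq_top_iff.mpr (le_trans ?_ (ENNReal.le_tsum i)))
      rw [htop, ENNReal.top_rpow_of_pos hs]
    set r : ℝ := (EMetric.diam (t i)).toReal with hr
    have hrpos : 0 < r := ENNReal.toReal_pos hd0 hdne
    have hofr : ENNReal.ofReal r = EMetric.diam (t i) := ENNReal.ofReal_toReal hdne
    have hsubset : A ∩ t i ⊆ A ∩ Metric.closedBall x r := by
      rintro y ⟨hyA, hyt⟩
      refine ⟨hyA, ?_⟩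
      rw [← Metric.emetric_closedBall hrpos.le]
      rw [EMetric.mem_closedBall, hofr]
      exact EMetric.edist_le_diam_of_mem hyt hx.2
    have hball := hcon x r hrpos
    calc hContent s (A ∩ t i) ≤ hContent s (A ∩ Metric.closedBall x r) :=
          hContent_mono hs hsubset
      _ ≤ c * EMetric.diam (Metric.closedBall x r) ^ s := hball.le
      _ ≤ c * (2 * EMetric.diam (t i)) ^ s := by
          gcongr
          rw [← Metric.emetric_closedBall hrpos.le, ← hofr]
          exact EMetric.diam_closedBall
  -- put it together
  have hkey : H ≤ c * 2 ^ s * (2 * H) := by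
    calc H = hContent s (⋃ i, A ∩ t i) := by
          rw [← Set.inter_iUnion, Set.inter_eq_self_of_subset_left hcov]
      _ ≤ ∑' i, hContent s (A ∩ t i) := hContent_iUnion_le hs _
      _ ≤ ∑' i, c * (2 * EMetric.diam (t i)) ^ s := ENNReal.tsum_le_tsum hpiece
      _ = c * 2 ^ s * ∑' i, EMetric.diam (t i) ^ s := by
          rw [← ENNReal.tsum_mul_left]
          congr 1 with i
          rw [ENNReal.mul_rpow_of_nonneg _ _ hs.le, mul_assoc]
      _ ≤ c * 2 ^ s * (2 * H) := by gcongr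
  have h2ne : (2 : ℝ≥0∞) ≠ 0 := by norm_num
  have h2t : (2 : ℝ≥0∞) ≠ ⊤ := by norm_num
  have hfinal : c * 2 ^ s * 2 = 1 / 2 := by
    rw [hc_eq, ← ENNReal.rpow_add _ _ h2ne h2t,
      show (-2 - s + s : ℝ) = -2 by ring]
    have h4 : (2 : ℝ≥0∞) ^ (-2 : ℝ) = 1 / 4 := by
      rw [ENNReal.rpow_neg, show ((2 : ℝ)) = ((2 : ℕ) : ℝ) by norm_num,
        ENNReal.rpow_natCast, one_div]
      norm_num
    rw [h4, one_div, one_div, show (4 : ℝ≥0∞) = 2 * 2 by norm_num,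
      ENNReal.mul_inv (Or.inl h2ne) (Or.inl h2t), mul_assoc,
      ENNReal.inv_mul_cancel h2ne h2t, mul_one]
  rw [show c * 2 ^ s * (2 * H) = c * 2 ^ s * 2 * H by ring, hfinal] at hkey
  have h12 : (1 / 2 : ℝ≥0∞) * H < 1 * H :=
    ENNReal.mul_lt_mul_left hHpos.ne' hHne (by norm_num)
  rw [one_mul] at h12
  exact absurd (lt_of_le_of_lt hkey h12) (lt_irrefl H)
end

section
/- Suppose compact sets A_i ⊂ ℝⁿ converge in the Hausdorff metric to a compact set A, and for each i the set A_i does not contain any angle from the closed interval [α − δ + 1/i, α + δ − 1/i]. Then A does not contain any angle from the open interval (α − δ, α + δ). -/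
open InnerProductGeometry Filter

/-- The set `A` contains the angle `α`. -/
def ContainsAngle {n : ℕ} (A : Set (EuclideanSpace ℝ (Fin n))) (α : ℝ) : Prop :=
  ∃ x y z, x ∈ A ∧ y ∈ A ∧ z ∈ A ∧ x ≠ y ∧ x ≠ z ∧ y ≠ z ∧
    angle (y - x) (z - x) = α

set_option maxHeartbeats 1000000 in
theorem stmt9 (n : ℕ) (α δ : ℝ) (hδ : 0 < δ)
    (A : ℕ → Set (EuclideanSpace ℝ (Fin n))) (hAi : ∀ i, IsCompact (A i))
    (B : Set (EuclideanSpace ℝ (Fin n))) (hB : IsCompact B)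
    (hconv : Tendsto (fun i => EMetric.hausdorffEdist (A i) B) atTop (nhds 0))
    (havoid : ∀ i : ℕ, ∀ θ ∈ Set.Icc (α - δ + 1 / (i + 1 : ℝ)) (α + δ - 1 / (i + 1 : ℝ)),
      ¬ ContainsAngle (A i) θ) :
    ∀ θ ∈ Set.Ioo (α - δ) (α + δ), ¬ ContainsAngle B θ := by
  rintro θ ⟨hθ1, hθ2⟩ ⟨x, y, z, hxB, hyB, hzB, hxy, hxz, hyz, hang⟩
  have hy0 : y - x ≠ 0 := sub_ne_zero.mpr (Ne.symm hxy)
  have hz0 : z - x ≠ 0 := sub_ne_zero.mpr (Ne.symm hxz)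
  set ε : ℝ := min (θ - (α - δ)) ((α + δ) - θ) / 2 with hεdef
  have hεpos : 0 < ε := by
    have : 0 < min (θ - (α - δ)) ((α + δ) - θ) := lt_min (by linarith) (by linarith)
    positivity
  have h2ε1 : 2 * ε ≤ θ - (α - δ) := by
    have := min_le_left (θ - (α - δ)) ((α + δ) - θ); rw [hεdef]; linarith
  have h2ε2 : 2 * ε ≤ (α + δ) - θ := by
    have := min_le_right (θ - (α - δ)) ((α + δ) - θ); rw [hεdef]; linarith
  -- continuity of angle
  have hc : ContinuousAt (fun p : EuclideanSpace ℝ (Fin n) × EuclideanSpace ℝ (Fin n) =>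
      angle p.1 p.2) (y - x, z - x) := InnerProductGeometry.continuousAt_angle hy0 hz0
  rw [Metric.continuousAt_iff] at hc
  obtain ⟨r, hrpos, hr⟩ := hc ε hεpos
  -- size of perturbation
  set s : ℝ := min (r / 3) (min (dist x y) (min (dist x z) (dist y z)) / 3) with hsdef
  have hspos : 0 < s := by
    have h1 : 0 < dist x y := dist_pos.mpr hxy
    have h2 : 0 < dist x z := dist_pos.mpr hxz
    have h3 : 0 < dist y z := dist_pos.mpr hyz
    have : 0 < min (dist x y) (min (dist x z) (dist y z)) := lt_min h1 (lt_min h2 h3)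
    have : 0 < min (dist x y) (min (dist x z) (dist y z)) / 3 := by positivity
    exact lt_min (by positivity) this
  have hsr : s ≤ r / 3 := min_le_left _ _
  have hsxy : s ≤ dist x y / 3 := le_trans (min_le_right _ _)
    (by have := min_le_left (dist x y) (min (dist x z) (dist y z)); linarith)
  have hsxz : s ≤ dist x z / 3 := le_trans (min_le_right _ _)
    (by have h := min_le_right (dist x y) (min (dist x z) (dist y z))
        have := min_le_left (dist x z) (dist y z); linarith)
  have hsyz : s ≤ dist y z / 3 := le_trans (min_le_right _ _)
    (by have h := min_le_right (dist x y) (min (dist x z) (dist y z))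
        have := min_le_right (dist x z) (dist y z); linarith)
  -- find a large index
  have hev1 : ∀ᶠ i : ℕ in atTop, EMetric.hausdorffEdist (A i) B < ENNReal.ofReal s :=
    hconv (Iio_mem_nhds (by simp [ENNReal.ofReal_pos, hspos]))
  have hev2 : ∀ᶠ i : ℕ in atTop, 1 / ((i : ℝ) + 1) ≤ ε := by
    obtain ⟨N, hN⟩ := exists_nat_gt (1 / ε)
    filter_upwards [eventually_ge_atTop N] with i hi
    have hi1 : (1 : ℝ) / ε < (i : ℝ) + 1 := by
      have : (N : ℝ) ≤ (i : ℝ) := Nat.cast_le.mpr hi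
      linarith
    rw [div_le_iff₀ (by positivity)]
    rw [div_lt_iff₀ hεpos] at hN
    have : (N : ℝ) ≤ (i : ℝ) := Nat.cast_le.mpr hi
    nlinarith
  obtain ⟨i, hdi, hεi⟩ := (hev1.and hev2).exists
  -- pick approximating points
  have hBA : EMetric.hausdorffEdist B (A i) < ENNReal.ofReal s := by
    unfold EMetric.hausdorffEdist at *; rwa [EMetric.hausdorffEdist_comm]
  obtain ⟨x', hx'A, hx'⟩ := EMetric.exists_edist_lt_of_hausdorffEdist_lt hxB hBA
  obtain ⟨y', hy'A, hy'⟩ := EMetric.exists_edist_lt_of_hausdorffEdist_lt hyB hBA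
  obtain ⟨z', hz'A, hz'⟩ := EMetric.exists_edist_lt_of_hausdorffEdist_lt hzB hBA
  rw [edist_lt_ofReal] at hx' hy' hz'
  -- distinctness
  have hxy' : x' ≠ y' := by
    intro h
    rw [h] at hx'
    have h1 : dist x y ≤ dist x y' + dist y' y := dist_triangle _ _ _
    rw [dist_comm y' y] at h1
    linarith
  have hxz' : x' ≠ z' := by
    intro h
    rw [h] at hx'
    have h1 : dist x z ≤ dist x z' + dist z' z := dist_triangle _ _ _
    rw [dist_comm z' z] at h1
    linarith
  have hyz' : y' ≠ z' := by
    intro h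
    rw [h] at hy'
    have h1 : dist y z ≤ dist y z' + dist z' z := dist_triangle _ _ _
    rw [dist_comm z' z] at h1
    linarith
  -- angle close
  have hdist : dist ((y' - x', z' - x') :
      EuclideanSpace ℝ (Fin n) × EuclideanSpace ℝ (Fin n)) (y - x, z - x) < r := by
    rw [Prod.dist_eq]
    have h1 : dist (y' - x') (y - x) < r := by
      calc dist (y' - x') (y - x) ≤ dist y' y + dist x' x := dist_sub_sub_le _ _ _ _
        _ < s + s := by
            have := dist_comm x x'
            have := dist_comm y y'
            nlinarith
        _ ≤ r := by linarith
    have h2 : dist (z' - x') (z - x) < r := by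
      calc dist (z' - x') (z - x) ≤ dist z' z + dist x' x := dist_sub_sub_le _ _ _ _
        _ < s + s := by
            have := dist_comm x x'
            have := dist_comm z z'
            nlinarith
        _ ≤ r := by linarith
    exact max_lt h1 h2
  have hang' := hr hdist
  simp only [hang] at hang'
  rw [Real.dist_eq, abs_lt] at hang'
  -- contradiction with havoid
  refine havoid i (angle (y' - x') (z' - x')) ⟨?_, ?_⟩
    ⟨x', y', z', hx'A, hy'A, hz'A, hxy', hxz', hyz', rfl⟩
  · push_cast
    linarith [hang'.1]
  · push_cast
    linarith [hang'.2]
end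

section
/- Let A ⊂ ℝⁿ be a bounded set whose upper Minkowski dimension exceeds t > 0. Then there exist infinitely many positive integers k such that for every integer 0 < l < k there are more than 2^{(k−l)t} points in A with the property that the distance between any two of them lies in the interval [2^{−k+1}, 2^{−l+2}]. -/
open Filter Set

/-- The maximal number of points of `A` that are centers of disjoint closed balls of
radius `ε` (equivalently, with pairwise distances greater than `2ε`), as `ℝ≥0∞`. -/
noncomputable def packNum {X : Type*} [MetricSpace X] (A : Set X) (ε : ℝ) : ENNReal :=
  ⨆ (S : Finset X) (_ : ↑S ⊆ A ∧ (S : Set X).Pairwise fun x y => 2 * ε < dist x y),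
    (S.card : ENNReal)

/-- The upper Minkowski dimension, defined via packing numbers. -/
noncomputable def upperMinkDim {X : Type*} [MetricSpace X] (A : Set X) : ℝ :=
  sSup {s : ℝ |
    limsup (fun ε : ℝ => packNum A ε * ENNReal.ofReal (ε ^ s)) (nhdsWithin 0 (Ioi 0)) = ⊤}

lemma packNum_anti {X : Type*} [MetricSpace X] (A : Set X) {ε₁ ε₂ : ℝ} (h : ε₁ ≤ ε₂) :
    packNum A ε₂ ≤ packNum A ε₁ := by
  apply iSup₂_le
  intro S hS
  refine le_iSup₂_of_le S ⟨hS.1, hS.2.mono' ?_⟩ le_rfl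
  intro x y hxy
  exact lt_of_le_of_lt (by linarith) hxy

lemma card_bound {X : Type*} [MetricSpace X] {A : Set X} (hA : TotallyBounded A) {ε : ℝ}
    (hε : 0 < ε) :
    ∃ N : ℕ, ∀ S : Finset X,
      ↑S ⊆ A ∧ (S : Set X).Pairwise (fun x y => 2 * ε < dist x y) → S.card ≤ N := by
  obtain ⟨t, htfin, hcov⟩ := Metric.totallyBounded_iff.1 hA ε hε
  refine ⟨htfin.toFinset.card, fun S ⟨hSA, hsep⟩ => ?_⟩
  have hmem : ∀ x ∈ S, ∃ y ∈ htfin.toFinset, x ∈ Metric.ball y ε := by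
    intro x hx
    have := hcov (hSA hx)
    simp only [mem_iUnion] at this
    obtain ⟨y, hy, hxy⟩ := this
    exact ⟨y, htfin.mem_toFinset.2 hy, hxy⟩
  choose! f hf1 hf2 using hmem
  apply Finset.card_le_card_of_injOn f (fun x hx => hf1 x hx)
  intro x hx y hy hxy
  by_contra hne
  have h1 := hf2 x hx
  have h2 := hf2 y hy
  rw [hxy] at h1
  have : dist x y < 2 * ε := by
    rw [Metric.mem_ball] at h1 h2
    calc dist x y ≤ dist x (f y) + dist (f y) y := dist_triangle _ _ _
    _ < ε + ε := by rw [dist_comm (f y) y]; exact add_lt_add h1 h2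
    _ = 2 * ε := by ring
  exact absurd (hsep (Finset.mem_coe.2 hx) (Finset.mem_coe.2 hy) hne) (not_lt.2 this.le)

lemma packNum_attained {X : Type*} [MetricSpace X] {A : Set X} (hA : TotallyBounded A) {ε : ℝ}
    (hε : 0 < ε) :
    ∃ S : Finset X, ↑S ⊆ A ∧ (S : Set X).Pairwise (fun x y => 2 * ε < dist x y) ∧
      packNum A ε = S.card ∧
      ∀ S' : Finset X, ↑S' ⊆ A ∧ (S' : Set X).Pairwise (fun x y => 2 * ε < dist x y) →
        S'.card ≤ S.card := by
  obtain ⟨N, hN⟩ := card_bound hA hε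
  set C : Set ℕ := {c | ∃ S : Finset X,
    (↑S ⊆ A ∧ (S : Set X).Pairwise (fun x y => 2 * ε < dist x y)) ∧ S.card = c} with hC
  have hne : C.Nonempty := ⟨0, ∅, ⟨by simp, by simp⟩, rfl⟩
  have hbdd : BddAbove C := ⟨N, fun c ⟨S, hS, hc⟩ => hc ▸ hN S hS⟩
  obtain ⟨S, hS, hcard⟩ := Nat.sSup_mem hne hbdd
  have hmax : ∀ S' : Finset X, ↑S' ⊆ A ∧ (S' : Set X).Pairwise (fun x y => 2 * ε < dist x y) →
      S'.card ≤ S.card := by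
    intro S' hS'
    rw [hcard]
    exact le_csSup hbdd ⟨S', hS', rfl⟩
  refine ⟨S, hS.1, hS.2, le_antisymm ?_ ?_, hmax⟩
  · exact iSup₂_le fun S' hS' => Nat.cast_le.2 (hmax S' hS')
  · exact le_iSup₂_of_le S hS le_rfl

theorem stmt10 (n : ℕ) (A : Set (EuclideanSpace ℝ (Fin n))) (hbd : Bornology.IsBounded A)
    (t : ℝ) (ht : 0 < t) (hdim : t < upperMinkDim A) :
    {k : ℕ | 0 < k ∧ ∀ l : ℕ, 0 < l → l < k →
      ∃ S : Finset (EuclideanSpace ℝ (Fin n)), ↑S ⊆ A ∧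
        (2 : ℝ) ^ (((k : ℝ) - l) * t) < S.card ∧
        ∀ x ∈ S, ∀ y ∈ S, x ≠ y →
          dist x y ∈ Icc ((2 : ℝ) ^ (-(k : ℝ) + 1)) ((2 : ℝ) ^ (-(l : ℝ) + 2))}.Infinite := by
  classical
  have htb : TotallyBounded A :=
    TotallyBounded.subset subset_closure hbd.isCompact_closure.totallyBounded
  -- extract an exponent s > t with limsup = ⊤
  obtain ⟨s, hstop, hts⟩ : ∃ s, (limsup (fun ε : ℝ => packNum A ε * ENNReal.ofReal (ε ^ s))
      (nhdsWithin 0 (Ioi 0)) = ⊤) ∧ t < s := by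
    by_contra hcon
    push_neg at hcon
    have : upperMinkDim A ≤ t := Real.sSup_le (fun x hx => hcon x hx) ht.le
    exact absurd hdim (not_lt.2 this)
  have hs0 : 0 < s := ht.trans hts
  -- choose maximal packings at dyadic scales
  have key : ∀ k : ℕ, ∃ S : Finset (EuclideanSpace ℝ (Fin n)),
      ↑S ⊆ A ∧ (S : Set (EuclideanSpace ℝ (Fin n))).Pairwise
        (fun x y => 2 * (2:ℝ)^(-(k:ℝ)) < dist x y) ∧
      packNum A ((2:ℝ)^(-(k:ℝ))) = S.card ∧
      ∀ S' : Finset (EuclideanSpace ℝ (Fin n)),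
        ↑S' ⊆ A ∧ (S' : Set (EuclideanSpace ℝ (Fin n))).Pairwise
          (fun x y => 2 * (2:ℝ)^(-(k:ℝ)) < dist x y) →
        S'.card ≤ S.card :=
    fun k => packNum_attained htb (Real.rpow_pos_of_pos two_pos _)
  choose Sk hsub hsep hval hmax using key
  set b : ℕ → ℕ := fun k => (Sk k).card with hb
  set a : ℕ → ℝ := fun k => (b k : ℝ) * 2 ^ (-(k:ℝ) * t) with ha
  -- unboundedness of a
  have hunb : ∀ C : ℝ, ∃ k : ℕ, C < a k := by
    intro C
    set D : ℝ := (2:ℝ) ^ s * (max C 0 + 1) with hD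
    have hD0 : 0 < D := by positivity
    have hfreq : ∃ᶠ ε in nhdsWithin (0:ℝ) (Ioi 0),
        ENNReal.ofReal D < packNum A ε * ENNReal.ofReal (ε ^ s) := by
      by_contra hcon
      rw [not_frequently] at hcon
      have hls : limsup (fun ε : ℝ => packNum A ε * ENNReal.ofReal (ε ^ s))
          (nhdsWithin 0 (Ioi 0)) ≤ ENNReal.ofReal D :=
        limsup_le_of_le (by isBoundedDefault) (hcon.mono fun ε h => not_lt.1 h)
      rw [hstop] at hls
      exact absurd hls (by simp)
    have hev : ∀ᶠ ε in nhdsWithin (0:ℝ) (Ioi 0), ε ∈ Ioo (0:ℝ) 1 :=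
      eventually_mem_set.mpr (Ioo_mem_nhdsGT one_pos)
    obtain ⟨ε, hεD, hε0, hε1⟩ := (hfreq.and_eventually hev).exists
    set r : ℝ := Real.logb 2 ε⁻¹ with hr
    have hεinv : 1 ≤ ε⁻¹ := by nlinarith [mul_inv_cancel₀ hε0.ne', inv_pos.2 hε0]
    have hr0 : 0 ≤ r := Real.logb_nonneg one_lt_two hεinv
    set k : ℕ := ⌈r⌉₊ with hk
    have hlogε : Real.logb 2 ε = -r := by rw [hr, Real.logb_inv]; ring
    have h2k : (2:ℝ) ^ (-(k:ℝ)) ≤ ε := by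
      have h1 : -(k:ℝ) ≤ Real.logb 2 ε := by
        rw [hlogε]
        have := Nat.le_ceil r
        linarith
      calc (2:ℝ)^(-(k:ℝ)) ≤ 2 ^ Real.logb 2 ε :=
        Real.rpow_le_rpow_of_exponent_le one_le_two h1
      _ = ε := Real.rpow_logb two_pos (by norm_num) hε0
    have hεk : ε < (2:ℝ) ^ (-(k:ℝ) + 1) := by
      have h1 : Real.logb 2 ε < -(k:ℝ) + 1 := by
        have := Nat.ceil_lt_add_one hr0
        rw [hlogε]; linarith
      calc ε = 2 ^ Real.logb 2 ε := (Real.rpow_logb two_pos (by norm_num) hε0).symm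
      _ < _ := Real.rpow_lt_rpow_of_exponent_lt one_lt_two h1
    have hle : packNum A ε ≤ ((b k : ℕ) : ENNReal) := by
      rw [hb]
      rw [← hval k]
      exact packNum_anti A h2k
    have hlt : ENNReal.ofReal D < ((b k : ℕ) : ENNReal) * ENNReal.ofReal (ε ^ s) :=
      lt_of_lt_of_le hεD (mul_le_mul_left hle _)
    have hfin : ((b k : ℕ) : ENNReal) * ENNReal.ofReal (ε ^ s)
        = ENNReal.ofReal ((b k : ℝ) * ε ^ s) := by
      rw [ENNReal.ofReal_mul (by positivity), ENNReal.ofReal_natCast]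
    rw [hfin] at hlt
    have hreal : D < (b k : ℝ) * ε ^ s := (ENNReal.ofReal_lt_ofReal_iff_of_nonneg hD0.le).1 hlt
    have hεs : ε ^ s ≤ (2:ℝ) ^ ((-(k:ℝ)+1) * s) := by
      rw [Real.rpow_mul (by norm_num : (0:ℝ) ≤ 2)]
      exact Real.rpow_le_rpow hε0.le hεk.le hs0.le
    have h2 : (2:ℝ) ^ ((-(k:ℝ)+1)*s) = 2 ^ (-(k:ℝ)*s) * 2 ^ s := by
      rw [← Real.rpow_add two_pos]; congr 1; ring
    have h3 : (2:ℝ) ^ (-(k:ℝ)*s) ≤ 2 ^ (-(k:ℝ)*t) := by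
      apply Real.rpow_le_rpow_of_exponent_le one_le_two
      have : (0:ℝ) ≤ (k:ℝ) := Nat.cast_nonneg k
      nlinarith
    have h2s : (0:ℝ) < 2 ^ s := Real.rpow_pos_of_pos two_pos _
    have hchain : (max C 0 + 1) * 2 ^ s < ((b k:ℝ) * 2 ^ (-(k:ℝ)*s)) * 2 ^ s := by
      calc (max C 0 + 1) * 2^s = D := by rw [hD]; ring
      _ < (b k:ℝ) * ε ^ s := hreal
      _ ≤ (b k:ℝ) * ((2:ℝ) ^ (-(k:ℝ)*s) * 2^s) := by
          rw [← h2]; exact mul_le_mul_of_nonneg_left hεs (Nat.cast_nonneg _)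
      _ = _ := by ring
    have h4 : max C 0 + 1 < (b k : ℝ) * 2 ^ (-(k:ℝ)*s) := lt_of_mul_lt_mul_right hchain h2s.le
    have h5 : (b k:ℝ) * 2 ^ (-(k:ℝ)*s) ≤ a k := by
      rw [ha]
      exact mul_le_mul_of_nonneg_left h3 (Nat.cast_nonneg _)
    exact ⟨k, by have := le_max_left C 0; linarith⟩
  -- record indices
  have hrec : ∀ N : ℕ, ∃ k, N < k ∧ ∀ l, l < k → a l < a k := by
    intro N
    have hMex : ∀ l ≤ N, a l ≤ (Finset.range (N+1)).sup' ⟨0, by simp⟩ a :=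
      fun l hl => Finset.le_sup' a (Finset.mem_range.2 (Nat.lt_succ_of_le hl))
    set M := (Finset.range (N+1)).sup' ⟨0, by simp⟩ a with hM
    obtain ⟨m, hm⟩ := hunb M
    have hQ : ∃ k, M < a k := ⟨m, hm⟩
    refine ⟨Nat.find hQ, ?_, ?_⟩
    · by_contra h
      push_neg at h
      exact absurd (Nat.find_spec hQ) (not_lt.2 (hMex _ h))
    · intro l hl
      exact lt_of_le_of_lt (not_lt.1 (Nat.find_min hQ hl)) (Nat.find_spec hQ)
  -- conclusion
  apply infinite_of_forall_exists_gt
  intro N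
  obtain ⟨k, hNk, hrecord⟩ := hrec N
  refine ⟨k, ⟨lt_of_le_of_lt (Nat.zero_le N) hNk, ?_⟩, hNk⟩
  intro l hl0 hlk
  have halk := hrecord l hlk
  have hbb : (b l : ℝ) * 2 ^ (((k:ℝ) - l) * t) < b k := by
    have h2kt : (0:ℝ) < 2 ^ ((k:ℝ)*t) := Real.rpow_pos_of_pos two_pos _
    have hmul : (b l:ℝ) * 2 ^ (-(l:ℝ)*t) * 2 ^ ((k:ℝ)*t)
        < (b k:ℝ) * 2 ^ (-(k:ℝ)*t) * 2 ^ ((k:ℝ)*t) := mul_lt_mul_of_pos_right halk h2kt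
    have e1 : (2:ℝ) ^ (-(l:ℝ)*t) * 2 ^ ((k:ℝ)*t) = 2 ^ (((k:ℝ)-l)*t) := by
      rw [← Real.rpow_add two_pos]; congr 1; ring
    have e2 : (2:ℝ) ^ (-(k:ℝ)*t) * 2 ^ ((k:ℝ)*t) = 1 := by
      rw [← Real.rpow_add two_pos]
      norm_num
    calc (b l:ℝ) * 2 ^ (((k:ℝ)-l)*t) = (b l:ℝ) * 2 ^ (-(l:ℝ)*t) * 2 ^ ((k:ℝ)*t) := by
          rw [mul_assoc, e1]
    _ < (b k:ℝ) * 2 ^ (-(k:ℝ)*t) * 2 ^ ((k:ℝ)*t) := hmul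
    _ = b k := by rw [mul_assoc, e2, mul_one]
  set εl : ℝ := (2:ℝ) ^ (-(l:ℝ)) with hεl
  have hεl0 : 0 < εl := Real.rpow_pos_of_pos two_pos _
  set cand := (Sk k).powerset.filter
    (fun Y : Finset (EuclideanSpace ℝ (Fin n)) =>
      (Y : Set (EuclideanSpace ℝ (Fin n))).Pairwise fun x y => 2 * εl < dist x y)
    with hcand
  have hcand_ne : cand.Nonempty := ⟨∅, by simp [hcand]⟩
  obtain ⟨Y, hYc, hYmax⟩ := Finset.exists_max_image cand (fun Y => Y.card) hcand_ne
  rw [hcand, Finset.mem_filter, Finset.mem_powerset] at hYc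
  obtain ⟨hYsub, hYsep⟩ := hYc
  have hYcard : Y.card ≤ b l :=
    hmax l Y ⟨(Finset.coe_subset.2 hYsub).trans (hsub k), hYsep⟩
  have hcov : ∀ x ∈ Sk k, ∃ y ∈ Y, dist x y ≤ 2 * εl := by
    intro x hx
    by_contra hcon
    push_neg at hcon
    have hxY : x ∉ Y := by
      intro hxY
      have := hcon x hxY
      simp only [dist_self] at this
      linarith
    have hins : insert x Y ∈ cand := by
      rw [hcand, Finset.mem_filter, Finset.mem_powerset]
      refine ⟨Finset.insert_subset hx hYsub, ?_⟩
      rw [Finset.coe_insert]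
      apply Set.Pairwise.insert hYsep
      intro y hy _
      exact ⟨hcon y (Finset.mem_coe.1 hy), by rw [dist_comm]; exact hcon y (Finset.mem_coe.1 hy)⟩
    have := hYmax _ hins
    rw [Finset.card_insert_of_notMem hxY] at this
    omega
  choose! f hfY hfd using hcov
  set n0 := ⌊(2:ℝ) ^ (((k:ℝ) - l) * t)⌋₊ with hn0
  have hmuln : Y.card * n0 < (Sk k).card := by
    have hfloor : (n0:ℝ) ≤ 2 ^ (((k:ℝ)-l)*t) := Nat.floor_le (by positivity)
    have h1 : ((Y.card * n0 : ℕ) : ℝ) ≤ (b l : ℝ) * 2 ^ (((k:ℝ)-l)*t) := by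
      push_cast
      exact mul_le_mul (by exact_mod_cast hYcard) hfloor (Nat.cast_nonneg _) (Nat.cast_nonneg _)
    have h2 := h1.trans_lt hbb
    exact_mod_cast h2
  obtain ⟨y, hyY, hfib⟩ := Finset.exists_lt_card_fiber_of_mul_lt_card_of_maps_to hfY hmuln
  refine ⟨(Sk k).filter (fun x => f x = y), ?_, ?_, ?_⟩
  · exact (Finset.coe_subset.2 (Finset.filter_subset _ _)).trans (hsub k)
  · have hlt1 : (2:ℝ) ^ (((k:ℝ)-l)*t) < n0 + 1 := Nat.lt_floor_add_one _
    have hlt2 : (n0:ℝ) + 1 ≤ ((Sk k).filter (fun x => f x = y)).card := by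
      exact_mod_cast hfib
    linarith
  · intro x hx x' hx' hne
    rw [Finset.mem_filter] at hx hx'
    constructor
    · have hd := hsep k (Finset.mem_coe.2 hx.1) (Finset.mem_coe.2 hx'.1) hne
      have e : (2:ℝ) ^ (-(k:ℝ)+1) = 2 ^ (-(k:ℝ)) * 2 := by
        rw [Real.rpow_add two_pos, Real.rpow_one]
      rw [e]
      linarith
    · have d1 := hfd x hx.1
      have d2 := hfd x' hx'.1
      rw [hx.2] at d1
      rw [hx'.2] at d2
      have htri : dist x x' ≤ dist x y + dist y x' := dist_triangle _ _ _
      have h4 : (2:ℝ) ^ (2:ℝ) = 4 := by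
        calc (2:ℝ) ^ (2:ℝ) = (2:ℝ) ^ ((2:ℕ):ℝ) := by congr 1
        _ = (2:ℝ) ^ (2:ℕ) := Real.rpow_natCast 2 2
        _ = 4 := by norm_num
      have e : (2:ℝ) ^ (-(l:ℝ)+2) = εl * 4 := by
        rw [Real.rpow_add two_pos, h4, hεl]
      rw [e]
      rw [dist_comm y x'] at htri
      linarith
end

section
/- Any bounded set A ⊂ ℝⁿ (n ≥ 2) with upper Minkowski dimension greater than 1 contains angles arbitrarily close to 90°: for every ε > 0 there exist distinct points x, y, z ∈ A such that the angle at x between y − x and z − x lies in (90° − ε, 90° + ε). -/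
open Filter Set InnerProductGeometry Real

open MeasureTheory Metric
open scoped ENNReal

lemma packing_card_le {n : ℕ} (F : Finset (EuclideanSpace ℝ (Fin n)))
    (x₀ : EuclideanSpace ℝ (Fin n)) (ρ r : ℝ) (hρ : 0 < ρ) (hr : 0 ≤ r)
    (hFr : ∀ p ∈ F, dist p x₀ ≤ r)
    (hsep : ∀ p ∈ F, ∀ q ∈ F, p ≠ q → 2 * ρ ≤ dist p q) :
    (F.card : ℝ) ≤ ((r + ρ) / ρ) ^ n := by
  have hdisj : (↑F : Set (EuclideanSpace ℝ (Fin n))).PairwiseDisjoint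
      (fun p => Metric.ball p ρ) := by
    intro p hp q hq hpq
    exact ball_disjoint_ball
      (by linarith [hsep p (Finset.mem_coe.mp hp) q (Finset.mem_coe.mp hq) hpq])
  have hsub : ∀ p ∈ F, Metric.ball p ρ ⊆ Metric.ball x₀ (r + ρ) := by
    intro p hp y hy
    have h1 : dist y p < ρ := hy
    have h2 : dist p x₀ ≤ r := hFr p hp
    calc dist y x₀ ≤ dist y p + dist p x₀ := dist_triangle _ _ _
      _ < r + ρ := by linarith
  have hmeas : ∑ p ∈ F, volume (Metric.ball p ρ) ≤ volume (Metric.ball x₀ (r + ρ)) := by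
    rw [← measure_biUnion_finset hdisj (fun p _ => measurableSet_ball)]
    exact measure_mono (Set.iUnion₂_subset hsub)
  have hfr : Module.finrank ℝ (EuclideanSpace ℝ (Fin n)) = n := finrank_euclideanSpace_fin
  have hball : ∀ p : EuclideanSpace ℝ (Fin n), volume (Metric.ball p ρ)
      = ENNReal.ofReal (ρ ^ n) * volume (Metric.ball (0 : EuclideanSpace ℝ (Fin n)) 1) := by
    intro p
    rw [Measure.addHaar_ball_of_pos volume p hρ, hfr]
  have hball2 : volume (Metric.ball x₀ (r + ρ))
      = ENNReal.ofReal ((r + ρ) ^ n)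
        * volume (Metric.ball (0 : EuclideanSpace ℝ (Fin n)) 1) := by
    rw [Measure.addHaar_ball_of_pos volume x₀ (by linarith), hfr]
  rw [hball2] at hmeas
  simp only [hball, Finset.sum_const] at hmeas
  have hB0 : volume (Metric.ball (0 : EuclideanSpace ℝ (Fin n)) 1) ≠ 0 :=
    (measure_ball_pos volume 0 one_pos).ne'
  have hBt : volume (Metric.ball (0 : EuclideanSpace ℝ (Fin n)) 1) ≠ ⊤ :=
    measure_ball_lt_top.ne
  have hmeas2 : (F.card : ℝ≥0∞) * ENNReal.ofReal (ρ ^ n) ≤ ENNReal.ofReal ((r + ρ) ^ n) := by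
    rw [← ENNReal.mul_le_mul_iff_left hB0 hBt]
    calc (F.card : ℝ≥0∞) * ENNReal.ofReal (ρ ^ n)
          * volume (Metric.ball (0 : EuclideanSpace ℝ (Fin n)) 1)
        = F.card • (ENNReal.ofReal (ρ ^ n)
          * volume (Metric.ball (0 : EuclideanSpace ℝ (Fin n)) 1)) := by
          rw [nsmul_eq_mul, mul_assoc]
      _ ≤ _ := hmeas
  have hreal : (F.card : ℝ) * ρ ^ n ≤ (r + ρ) ^ n := by
    rw [← ENNReal.ofReal_le_ofReal_iff (by positivity), ENNReal.ofReal_mul (by positivity),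
      ENNReal.ofReal_natCast]
    exact hmeas2
  rw [div_pow, le_div_iff₀ (by positivity)]
  exact hreal

lemma acute_arith {c ε w a b e : ℝ} (hc : 0 < c) (hε : 0 < ε) (hwε : 2 * ε ≤ w)
    (haw : w ≤ a) (hab : a ≤ b) (he : 0 < e)
    (h : c * (a * e) ≤ (a ^ 2 + e ^ 2 - b ^ 2) / 2) : 2 * (c * w) ≤ e := by
  have he2 : 2 * (c * a) * e ≤ e ^ 2 := by nlinarith
  have hca : 2 * (c * a) ≤ e := by
    have := (mul_le_mul_iff_left₀ he).mp he2
    nlinarith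
  nlinarith

lemma window_arith {c ε w a b e : ℝ} (hc : 0 < c) (hc1 : c ≤ 1) (hε : 0 < ε)
    (hwε : 2 * ε ≤ w) (haw : w ≤ a) (hb0 : 0 ≤ b) (hbw : b < w + c * ε) (hee : 2 * ε < e)
    (h : a ^ 2 + e ^ 2 + 2 * (c * (a * e)) ≤ b ^ 2) : False := by
  have h1 : w * (2 * ε) ≤ a * e := by
    apply mul_le_mul haw hee.le (by linarith) (by linarith)
  have h1' : c * (w * (2 * ε)) ≤ c * (a * e) := by
    apply mul_le_mul_of_nonneg_left h1 hc.le
  have h2 : w ^ 2 ≤ a ^ 2 := by nlinarith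
  have h3 : 4 * ε ^ 2 < e ^ 2 := by nlinarith
  have h4 : b ^ 2 < w ^ 2 + 2 * (c * ε * w) + c ^ 2 * ε ^ 2 := by nlinarith
  have h5 : c ^ 2 * ε ^ 2 ≤ ε ^ 2 := by
    nlinarith [mul_nonneg (mul_nonneg (sub_nonneg.mpr hc1) (by linarith : (0:ℝ) ≤ 1 + c))
      (sq_nonneg ε)]
  have hw0 : 0 < w := by linarith
  have h6 : 0 < c * ε * w := by positivity
  nlinarith

lemma geom_bound {n : ℕ} (c ε R : ℝ) (hc : 0 < c) (hc1 : c ≤ 1) (hε : 0 < ε) (hR : 0 < R)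
    (S : Finset (EuclideanSpace ℝ (Fin n)))
    (hnorm : ∀ p ∈ S, ‖p‖ ≤ R)
    (hsep : (S : Set (EuclideanSpace ℝ (Fin n))).Pairwise fun x y => 2 * ε < dist x y)
    (hang : ∀ x ∈ S, ∀ y ∈ S, ∀ z ∈ S, x ≠ y → x ≠ z → y ≠ z →
      c * (‖y - x‖ * ‖z - x‖) ≤ |(inner ℝ (y - x) (z - x) : ℝ)|) :
    (S.card : ℝ) ≤ 1 + (2 * R / (c * ε) + 1) * ((2 + c) / c) ^ n := by
  classical
  have hKpos : (0:ℝ) ≤ ((2 + c) / c) ^ n := by positivity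
  rcases S.eq_empty_or_nonempty with rfl | ⟨p₁, hp₁⟩
  · simp only [Finset.card_empty, Nat.cast_zero]
    positivity
  set T := S.erase p₁ with hT
  -- basic distance facts
  have hd : ∀ p ∈ T, 2 * ε < dist p p₁ ∧ dist p p₁ ≤ 2 * R := by
    intro p hp
    have hpS : p ∈ S := Finset.mem_of_mem_erase hp
    have hne : p ≠ p₁ := Finset.ne_of_mem_erase hp
    constructor
    · exact hsep (Finset.mem_coe.mpr hpS) (Finset.mem_coe.mpr hp₁) hne
    · calc dist p p₁ ≤ ‖p‖ + ‖p₁‖ := by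
            rw [dist_eq_norm]; exact norm_sub_le _ _
        _ ≤ 2 * R := by linarith [hnorm p hpS, hnorm p₁ hp₁]
  -- the inner product bound in terms of distances
  have hkey : ∀ p ∈ T, ∀ q ∈ T, p ≠ q →
      c * (dist p p₁ * dist p q) ≤
        |((dist p p₁) ^ 2 + (dist p q) ^ 2 - (dist q p₁) ^ 2) / 2| := by
    intro p hp q hq hpq
    have hpS : p ∈ S := Finset.mem_of_mem_erase hp
    have hqS : q ∈ S := Finset.mem_of_mem_erase hq
    have hpne : p ≠ p₁ := Finset.ne_of_mem_erase hp
    have hqne : q ≠ p₁ := Finset.ne_of_mem_erase hq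
    have h := hang p hpS p₁ hp₁ q hqS hpne hpq (Ne.symm hqne)
    have e1 : ‖p₁ - p‖ = dist p p₁ := by rw [dist_comm, dist_eq_norm]
    have e2 : ‖q - p‖ = dist p q := by rw [dist_comm, dist_eq_norm]
    have e3 : ‖(p₁ - p) - (q - p)‖ = dist q p₁ := by
      rw [sub_sub_sub_cancel_right, dist_comm, dist_eq_norm]
    have hinner : (inner ℝ (p₁ - p) (q - p) : ℝ)
        = ((dist p p₁) ^ 2 + (dist p q) ^ 2 - (dist q p₁) ^ 2) / 2 := by
      have hn := norm_sub_sq_real (p₁ - p) (q - p)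
      rw [e1, e2, e3] at hn
      linarith
    rw [e1, e2, hinner] at h
    exact h
  -- index into windows
  set J : ℕ := ⌊2 * R / (c * ε)⌋₊ + 1 with hJ
  have hidx : ∀ p ∈ T, ⌊(dist p p₁ - 2 * ε) / (c * ε)⌋₊ ∈ Finset.range J := by
    intro p hp
    rw [Finset.mem_range, hJ, Nat.lt_succ_iff]
    apply Nat.floor_mono
    apply div_le_div_of_nonneg_right ?_ (by positivity)
    · linarith [(hd p hp).2, hε]
  have hcard := Finset.card_eq_sum_card_fiberwise hidx
  -- bound each fiber
  have hfiber : ∀ j ∈ Finset.range J,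
      ((T.filter fun p => ⌊(dist p p₁ - 2 * ε) / (c * ε)⌋₊ = j).card : ℝ)
        ≤ ((2 + c) / c) ^ n := by
    intro j _
    set F := T.filter fun p => ⌊(dist p p₁ - 2 * ε) / (c * ε)⌋₊ = j with hF
    set w : ℝ := 2 * ε + j * (c * ε) with hw
    have hwε : 2 * ε ≤ w := by
      rw [hw]; nlinarith [Nat.cast_nonneg (α := ℝ) j, mul_pos hc hε]
    have hw0 : 0 < w := by linarith
    have hFT : ∀ p ∈ F, p ∈ T := fun p hp => (Finset.mem_filter.mp hp).1
    have hmemw : ∀ p ∈ F, w ≤ dist p p₁ ∧ dist p p₁ < w + c * ε := by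
      intro p hp
      have hpj := (Finset.mem_filter.mp hp).2
      have hpT := hFT p hp
      have hnn : 0 ≤ (dist p p₁ - 2 * ε) / (c * ε) := by
        have := (hd p hpT).1
        apply div_nonneg (by linarith) (by positivity)
      rw [Nat.floor_eq_iff hnn] at hpj
      obtain ⟨h1, h2⟩ := hpj
      have hcε : 0 < c * ε := by positivity
      constructor
      · have := (le_div_iff₀ hcε).mp h1
        rw [hw]; linarith
      · have := (div_lt_iff₀ hcε).mp h2
        rw [hw]; push_cast at this ⊢; linarith
    -- all pairs in the fiber are far apart
    have hfar : ∀ p ∈ F, ∀ q ∈ F, p ≠ q → 2 * (c * w) ≤ dist p q := by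
      -- first a directional version assuming dist p p₁ ≤ dist q p₁
      have main : ∀ p ∈ F, ∀ q ∈ F, p ≠ q → dist p p₁ ≤ dist q p₁ → 2 * (c * w) ≤ dist p q := by
        intro p hp q hq hpq hle
        set a := dist p p₁ with ha
        set b := dist q p₁ with hb
        set e := dist p q with he
        have h1 := hkey p (hFT p hp) q (hFT q hq) hpq
        have hpw := hmemw p hp
        have hqw := hmemw q hq
        have hae : 2 * ε < a := (hd p (hFT p hp)).1
        have hee : 2 * ε < e := hsep (Finset.mem_coe.mpr (Finset.mem_of_mem_erase (hFT p hp)))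
          (Finset.mem_coe.mpr (Finset.mem_of_mem_erase (hFT q hq))) hpq
        have he0 : (0:ℝ) < e := by rw [he]; exact dist_pos.mpr hpq
        have hb0 : (0:ℝ) ≤ b := by rw [hb]; exact dist_nonneg
        rw [le_abs] at h1
        rcases h1 with h1 | h1
        · -- acute case: e ≥ 2 c a ≥ 2 c w
          exact acute_arith hc hε hwε hpw.1 hle he0 h1
        · -- obtuse case: contradiction with thin window
          exfalso
          have h1' : a ^ 2 + e ^ 2 + 2 * (c * (a * e)) ≤ b ^ 2 := by linarith
          exact window_arith hc hc1 hε hwε hpw.1 hb0 hqw.2 hee h1'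
      intro p hp q hq hpq
      rcases le_total (dist p p₁) (dist q p₁) with h | h
      · exact main p hp q hq hpq h
      · rw [dist_comm]
        exact main q hq p hp (Ne.symm hpq) h
    have hball : ∀ p ∈ F, dist p p₁ ≤ 2 * w := by
      intro p hp
      have := (hmemw p hp).2
      nlinarith [hmemw p hp, mul_pos hc hε, hε]
    have hpack := packing_card_le F p₁ (c * w) (2 * w) (by positivity) (by positivity)
      hball hfar
    calc ((F.card : ℝ)) ≤ ((2 * w + c * w) / (c * w)) ^ n := hpack
      _ = ((2 + c) / c) ^ n := by
          congr 1
          field_simp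
  -- combine
  have hcardS : (S.card : ℝ) = (T.card : ℝ) + 1 := by
    rw [hT, Finset.card_erase_of_mem hp₁]
    have : 1 ≤ S.card := Finset.card_pos.mpr ⟨p₁, hp₁⟩
    push_cast [Nat.cast_sub this]
    ring
  have hsum0 : (T.card : ℝ) = ∑ j ∈ Finset.range J,
      ((T.filter fun p => ⌊(dist p p₁ - 2 * ε) / (c * ε)⌋₊ = j).card : ℝ) := by
    exact_mod_cast hcard
  have hsum : (T.card : ℝ) ≤ (J : ℝ) * ((2 + c) / c) ^ n := by
    rw [hsum0]
    calc (∑ j ∈ Finset.range J,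
        ((T.filter fun p => ⌊(dist p p₁ - 2 * ε) / (c * ε)⌋₊ = j).card : ℝ))
        ≤ ∑ j ∈ Finset.range J, ((2 + c) / c) ^ n := Finset.sum_le_sum hfiber
      _ = (J : ℝ) * ((2 + c) / c) ^ n := by
          rw [Finset.sum_const, Finset.card_range, nsmul_eq_mul]
  have hJle : (J : ℝ) ≤ 2 * R / (c * ε) + 1 := by
    rw [hJ]
    push_cast
    have := Nat.floor_le (a := 2 * R / (c * ε)) (by positivity)
    linarith
  have : (J : ℝ) * ((2 + c) / c) ^ n ≤ (2 * R / (c * ε) + 1) * ((2 + c) / c) ^ n :=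
    mul_le_mul_of_nonneg_right hJle hKpos
  linarith

theorem stmt12 (n : ℕ) (hn : 2 ≤ n) (A : Set (EuclideanSpace ℝ (Fin n)))
    (hbd : Bornology.IsBounded A) (hdim : 1 < upperMinkDim A) :
    ∀ ε : ℝ, 0 < ε → ∃ x ∈ A, ∃ y ∈ A, ∃ z ∈ A, x ≠ y ∧ x ≠ z ∧ y ≠ z ∧
      angle (y - x) (z - x) ∈ Set.Ioo (π / 2 - ε) (π / 2 + ε) := by
  intro ε₀ hε₀
  by_contra hcon
  push_neg at hcon
  set δ := min ε₀ 1 with hδdef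
  have hδ0 : 0 < δ := lt_min hε₀ one_pos
  have hδ1 : δ ≤ 1 := min_le_right _ _
  have hδε : δ ≤ ε₀ := min_le_left _ _
  set c := Real.sin δ with hcdef
  have hc0 : 0 < c := Real.sin_pos_of_pos_of_lt_pi hδ0 (by linarith [Real.pi_gt_three])
  have hc1 : c ≤ 1 := Real.sin_le_one δ
  obtain ⟨R₀, hR₀⟩ := isBounded_iff_forall_norm_le.mp hbd
  set R := max R₀ 1 with hRdef
  have hR0 : (0:ℝ) < R := lt_of_lt_of_le one_pos (le_max_right _ _)
  have hRA : ∀ a ∈ A, ‖a‖ ≤ R := fun a ha => le_trans (hR₀ a ha) (le_max_left _ _)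
  -- inner product bound from angle avoidance
  have hang : ∀ x ∈ A, ∀ y ∈ A, ∀ z ∈ A, x ≠ y → x ≠ z → y ≠ z →
      c * (‖y - x‖ * ‖z - x‖) ≤ |(inner ℝ (y - x) (z - x) : ℝ)| := by
    intro x hx y hy z hz hxy hxz hyz
    have hne1 : y - x ≠ 0 := sub_ne_zero.mpr (Ne.symm hxy)
    have hne2 : z - x ≠ 0 := sub_ne_zero.mpr (Ne.symm hxz)
    have hN : 0 < ‖y - x‖ * ‖z - x‖ :=
      mul_pos (norm_pos_iff.mpr hne1) (norm_pos_iff.mpr hne2)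
    have hnotin := hcon x hx y hy z hz hxy hxz hyz
    have hnotin' : angle (y-x) (z-x) ∉ Set.Ioo (π/2 - δ) (π/2 + δ) := by
      intro hmem
      exact hnotin ⟨by linarith [hmem.1], by linarith [hmem.2]⟩
    have hcos := InnerProductGeometry.cos_angle (y-x) (z-x)
    have h0 : 0 ≤ angle (y-x) (z-x) := angle_nonneg _ _
    have hpi : angle (y-x) (z-x) ≤ π := angle_le_pi _ _
    rw [Set.mem_Ioo, not_and_or, not_lt, not_lt] at hnotin'
    rcases hnotin' with hle | hge
    · have hcc : Real.cos (π/2 - δ) ≤ Real.cos (angle (y-x) (z-x)) :=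
        Real.cos_le_cos_of_nonneg_of_le_pi h0 (by linarith [Real.pi_pos]) hle
      rw [Real.cos_pi_div_two_sub, hcos] at hcc
      have := (le_div_iff₀ hN).mp hcc
      exact le_trans this (le_abs_self _)
    · have hcc : Real.cos (angle (y-x) (z-x)) ≤ Real.cos (π/2 + δ) :=
        Real.cos_le_cos_of_nonneg_of_le_pi (by linarith [Real.pi_pos]) hpi hge
      rw [show π/2 + δ = δ + π/2 by ring, Real.cos_add_pi_div_two, hcos] at hcc
      have h1 := (div_le_iff₀ hN).mp hcc
      have h2 : c * (‖y - x‖ * ‖z - x‖) ≤ -(inner ℝ (y - x) (z - x) : ℝ) := by linarith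
      exact le_trans h2 (neg_le_abs _)
  -- extract an exponent s > 1 with limsup = ⊤
  have hex : ∃ s : ℝ, 1 < s ∧ limsup (fun ε : ℝ => packNum A ε * ENNReal.ofReal (ε ^ s))
      (nhdsWithin 0 (Ioi 0)) = ⊤ := by
    by_contra hno
    push_neg at hno
    have hub : ∀ s ∈ {s : ℝ | limsup (fun ε : ℝ => packNum A ε * ENNReal.ofReal (ε ^ s))
        (nhdsWithin 0 (Ioi 0)) = ⊤}, s ≤ 1 := by
      intro s hs
      by_contra hs1
      push_neg at hs1
      exact hno s hs1 hs
    have hle := Real.sSup_le hub one_pos.le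
    rw [upperMinkDim] at hdim
    linarith
  obtain ⟨s, hs1, htop⟩ := hex
  set K := ((2 + c)/c)^n with hK
  have hKpos : (0:ℝ) ≤ K := by positivity
  have hpack : ∀ u : ℝ, 0 < u →
      packNum A u ≤ ENNReal.ofReal (1 + (2*R/(c*u) + 1) * K) := by
    intro u hu
    rw [packNum]
    apply iSup_le; intro S; apply iSup_le; intro hS
    rw [← ENNReal.ofReal_natCast]
    apply ENNReal.ofReal_le_ofReal
    exact geom_bound c u R hc0 hc1 hu hR0 S
      (fun p hp => hRA p (hS.1 (Finset.mem_coe.mpr hp))) hS.2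
      (fun x hx y hy z hz h1 h2 h3 =>
        hang x (hS.1 (Finset.mem_coe.mpr hx)) y (hS.1 (Finset.mem_coe.mpr hy))
          z (hS.1 (Finset.mem_coe.mpr hz)) h1 h2 h3)
  have hfg : ∀ᶠ u in nhdsWithin (0:ℝ) (Ioi 0),
      packNum A u * ENNReal.ofReal (u ^ s)
        ≤ ENNReal.ofReal ((1 + K) * u ^ s + (2*R*K/c) * u ^ (s-1)) := by
    filter_upwards [self_mem_nhdsWithin] with u hu
    have hu0 : (0:ℝ) < u := hu
    have hus0 : (0:ℝ) ≤ u ^ s := Real.rpow_nonneg hu0.le s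
    calc packNum A u * ENNReal.ofReal (u ^ s)
        ≤ ENNReal.ofReal (1 + (2*R/(c*u) + 1) * K) * ENNReal.ofReal (u ^ s) :=
          mul_le_mul_left (hpack u hu0) _
      _ = ENNReal.ofReal ((1 + (2*R/(c*u) + 1) * K) * u ^ s) := by
          rw [← ENNReal.ofReal_mul (by positivity)]
      _ = ENNReal.ofReal ((1 + K) * u ^ s + (2*R*K/c) * u ^ (s-1)) := by
          congr 1
          have hus : u ^ (s - 1) = u ^ s / u := by
            rw [Real.rpow_sub hu0, Real.rpow_one]
          rw [hus]
          field_simp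
          ring
  have h1 : Tendsto (fun u : ℝ => u ^ s) (nhdsWithin (0:ℝ) (Ioi 0)) (nhds 0) := by
    have h := (Real.continuousAt_rpow_const 0 s (Or.inr (by linarith))).tendsto
    rw [Real.zero_rpow (by linarith : s ≠ 0)] at h
    exact h.mono_left nhdsWithin_le_nhds
  have h2 : Tendsto (fun u : ℝ => u ^ (s-1)) (nhdsWithin (0:ℝ) (Ioi 0)) (nhds 0) := by
    have h := (Real.continuousAt_rpow_const 0 (s-1) (Or.inr (by linarith))).tendsto
    rw [Real.zero_rpow (by linarith : s - 1 ≠ 0)] at h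
    exact h.mono_left nhdsWithin_le_nhds
  have hts : Tendsto (fun u : ℝ => ENNReal.ofReal ((1 + K) * u ^ s + (2*R*K/c) * u ^ (s-1)))
      (nhdsWithin (0:ℝ) (Ioi 0)) (nhds 0) := by
    have h3 : Tendsto (fun u : ℝ => (1 + K) * u ^ s + (2*R*K/c) * u ^ (s-1))
        (nhdsWithin (0:ℝ) (Ioi 0)) (nhds ((1 + K) * 0 + (2*R*K/c) * 0)) :=
      ((h1.const_mul _).add (h2.const_mul _))
    rw [show (1 + K) * (0:ℝ) + (2*R*K/c) * 0 = 0 by ring] at h3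
    have h4 := ENNReal.tendsto_ofReal h3
    rw [ENNReal.ofReal_zero] at h4
    exact h4
  have hlim : limsup (fun ε : ℝ => packNum A ε * ENNReal.ofReal (ε ^ s))
      (nhdsWithin (0:ℝ) (Ioi 0)) ≤ 0 :=
    le_trans (limsup_le_limsup hfg) (le_of_eq hts.limsup_eq)
  rw [htop] at hlim
  simp at hlim
end

section
/- Let K ⊂ ℝⁿ be a nonempty compact set with K = S₀(K) ∪ … ∪ S_k(K) where each S_i is a homothety with ratio in (0,1) and the sets S_i(K) are pairwise disjoint (strong separation). Then the set of unit direction vectors { (x−y)/‖x−y‖ : x, y ∈ K, x ≠ y } is a closed (hence compact) subset of the unit sphere S^{n−1}. -/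
set_option maxHeartbeats 1000000


theorem stmt16 (n k : ℕ) (K : Set (EuclideanSpace ℝ (Fin n)))
    (hne : K.Nonempty) (hK : IsCompact K)
    (S : Fin (k + 1) → EuclideanSpace ℝ (Fin n) → EuclideanSpace ℝ (Fin n))
    (r : Fin (k + 1) → ℝ) (hhom : ∀ i, IsHomothety (S i) (r i))
    (hr : ∀ i, r i ∈ Set.Ioo (0 : ℝ) 1)
    (hunion : K = ⋃ i, S i '' K)
    (hdisj : ∀ i j, i ≠ j → Disjoint (S i '' K) (S j '' K)) :
    IsClosed {d : EuclideanSpace ℝ (Fin n) |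
      ∃ x ∈ K, ∃ y ∈ K, x ≠ y ∧ d = ‖x - y‖⁻¹ • (x - y)} := by
  classical
  -- basic facts about the homotheties
  have hsub : ∀ i (a b : EuclideanSpace ℝ (Fin n)), S i a - S i b = r i • (a - b) := by
    intro i a b
    obtain ⟨ci, hci⟩ := hhom i
    rw [hci a, hci b]
    module
  have hdist : ∀ i (a b : EuclideanSpace ℝ (Fin n)), dist (S i a) (S i b) = r i * dist a b := by
    intro i a b
    rw [dist_eq_norm, dist_eq_norm, hsub, norm_smul, Real.norm_eq_abs,
      abs_of_pos (hr i).1]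
  have hcont : ∀ i, Continuous (S i) := by
    intro i
    obtain ⟨ci, hci⟩ := hhom i
    have : S i = fun x => ci + r i • (x - ci) := funext hci
    rw [this]; fun_prop
  have hpiece : ∀ i, S i '' K ⊆ K := by
    intro i
    have h := Set.subset_iUnion (fun j => S j '' K) i
    rw [← hunion] at h
    exact h
  -- separation constant between distinct pieces
  have key : ∀ i j : Fin (k + 1), ∃ cij : ℝ, 0 < cij ∧
      (i ≠ j → ∀ x ∈ S i '' K, ∀ y ∈ S j '' K, cij ≤ dist x y) := by
    intro i j
    by_cases hij : i = j
    · exact ⟨1, one_pos, fun h => absurd hij h⟩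
    · have hAc : IsCompact ((S i '' K) ×ˢ (S j '' K)) :=
        (hK.image (hcont i)).prod (hK.image (hcont j))
      have hAn : ((S i '' K) ×ˢ (S j '' K)).Nonempty :=
        (hne.image _).prod (hne.image _)
      obtain ⟨p, hp, hmin⟩ := hAc.exists_isMinOn hAn
        (continuous_fst.dist continuous_snd).continuousOn
      refine ⟨dist p.1 p.2, ?_, fun _ x hx y hy => ?_⟩
      · rw [dist_pos]
        intro hpe
        exact Set.disjoint_left.mp (hdisj i j hij) hp.1 (hpe ▸ hp.2)
      · exact isMinOn_iff.mp hmin (x, y) (Set.mk_mem_prod hx hy)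
  choose g hg0 hg using key
  obtain ⟨p0, -, hp0⟩ := Finset.exists_min_image
    Finset.univ (fun p : Fin (k + 1) × Fin (k + 1) => g p.1 p.2) ⟨(0, 0), Finset.mem_univ _⟩
  obtain ⟨c, hcpos, hcle⟩ : ∃ c : ℝ, 0 < c ∧ ∀ i j, c ≤ g i j :=
    ⟨g p0.1 p0.2, hg0 p0.1 p0.2, fun i j => hp0 (i, j) (Finset.mem_univ _)⟩
  -- maximal ratio
  set ρ : ℝ := Finset.univ.sup' Finset.univ_nonempty r with hρ
  have hρ0 : 0 < ρ := lt_of_lt_of_le (hr 0).1 (Finset.le_sup' r (Finset.mem_univ 0))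
  have hρ1 : ρ < 1 := by
    rw [hρ, Finset.sup'_lt_iff]
    exact fun i _ => (hr i).2
  have hρle : ∀ i, r i ≤ ρ := fun i => Finset.le_sup' r (Finset.mem_univ i)
  -- direction is invariant under positive scaling
  have hdir : ∀ (t : ℝ) (v : EuclideanSpace ℝ (Fin n)), 0 < t →
      ‖t • v‖⁻¹ • (t • v) = ‖v‖⁻¹ • v := by
    intro t v ht
    rcases eq_or_ne v 0 with rfl | hv
    · simp
    · rw [norm_smul, Real.norm_eq_abs, abs_of_pos ht, mul_inv, smul_smul]
      have ht' : t ≠ 0 := ht.ne'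
      have hv' : ‖v‖ ≠ 0 := norm_ne_zero_iff.mpr hv
      congr 1
      field_simp
  -- descent lemma
  have descent : ∀ m : ℕ, ∀ x ∈ K, ∀ y ∈ K, Metric.diam K * ρ ^ m < dist x y →
      ∃ x' ∈ K, ∃ y' ∈ K, c ≤ dist x' y' ∧
        ‖x' - y'‖⁻¹ • (x' - y') = ‖x - y‖⁻¹ • (x - y) := by
    intro m
    induction m with
    | zero =>
      intro x hx y hy hlt
      exfalso
      have := Metric.dist_le_diam_of_mem hK.isBounded hx hy
      simp only [pow_zero, mul_one] at hlt
      linarith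
    | succ m ih =>
      intro x hx y hy hlt
      have hxy : x ≠ y := by
        intro h
        rw [h, dist_self] at hlt
        have : 0 ≤ Metric.diam K * ρ ^ (m + 1) :=
          mul_nonneg Metric.diam_nonneg (pow_nonneg hρ0.le _)
        linarith
      have hx' : x ∈ ⋃ i, S i '' K := hunion ▸ hx
      have hy' : y ∈ ⋃ i, S i '' K := hunion ▸ hy
      rw [Set.mem_iUnion] at hx' hy'
      obtain ⟨i, hxi⟩ := hx'
      obtain ⟨j, hyj⟩ := hy'
      by_cases hij : i = j
      · subst hij
        obtain ⟨a, ha, rfl⟩ := hxi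
        obtain ⟨b, hb, rfl⟩ := hyj
        have hab : Metric.diam K * ρ ^ m < dist a b := by
          have h1 : dist (S i a) (S i b) = r i * dist a b := hdist i a b
          have h2 : r i * (Metric.diam K * ρ ^ m) ≤ ρ * (Metric.diam K * ρ ^ m) := by
            apply mul_le_mul_of_nonneg_right (hρle i)
            exact mul_nonneg Metric.diam_nonneg (pow_nonneg hρ0.le _)
          have h3 : ρ * (Metric.diam K * ρ ^ m) = Metric.diam K * ρ ^ (m + 1) := by ring
          have h4 : r i * (Metric.diam K * ρ ^ m) < r i * dist a b := by
            rw [← h1]; linarith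
          exact lt_of_mul_lt_mul_left h4 (hr i).1.le
        obtain ⟨x', hx', y', hy', hc', hdir'⟩ := ih a ha b hb hab
        refine ⟨x', hx', y', hy', hc', ?_⟩
        rw [hdir', hsub i a b, hdir (r i) (a - b) (hr i).1]
      · refine ⟨x, hpiece i hxi, y, hpiece j hyj, ?_, rfl⟩
        exact le_trans (hcle i j) (hg i j hij x hxi y hyj)
  -- the set of directions is the image of a compact set
  set T : Set (EuclideanSpace ℝ (Fin n) × EuclideanSpace ℝ (Fin n)) :=
    (K ×ˢ K) ∩ {p | c ≤ dist p.1 p.2} with hT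
  have hTc : IsCompact T := by
    apply (hK.prod hK).inter_right
    exact isClosed_le continuous_const (continuous_fst.dist continuous_snd)
  have hfcont : ContinuousOn
      (fun p : EuclideanSpace ℝ (Fin n) × EuclideanSpace ℝ (Fin n) =>
        ‖p.1 - p.2‖⁻¹ • (p.1 - p.2)) T := by
    refine ContinuousOn.smul (f := fun p : EuclideanSpace ℝ (Fin n) × EuclideanSpace ℝ (Fin n) =>
      ‖p.1 - p.2‖⁻¹) (g := fun p => p.1 - p.2) ?_ ?_
    · apply ContinuousOn.inv₀
      · exact ((continuous_fst.sub continuous_snd).norm).continuousOn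
      · intro p hp
        rw [norm_ne_zero_iff, sub_ne_zero]
        intro h
        have := hp.2
        simp only [Set.mem_setOf_eq, h, dist_self] at this
        linarith
    · exact (continuous_fst.sub continuous_snd).continuousOn
  have himg : {d : EuclideanSpace ℝ (Fin n) |
      ∃ x ∈ K, ∃ y ∈ K, x ≠ y ∧ d = ‖x - y‖⁻¹ • (x - y)} =
      (fun p : EuclideanSpace ℝ (Fin n) × EuclideanSpace ℝ (Fin n) =>
        ‖p.1 - p.2‖⁻¹ • (p.1 - p.2)) '' T := by
    ext d
    constructor
    · rintro ⟨x, hx, y, hy, hxy, rfl⟩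
      have hdpos : 0 < dist x y := dist_pos.mpr hxy
      obtain ⟨m, hm⟩ : ∃ m : ℕ, Metric.diam K * ρ ^ m < dist x y := by
        rcases eq_or_lt_of_le (Metric.diam_nonneg (s := K)) with h0 | h0
        · exact ⟨0, by rw [← h0]; simpa using hdpos⟩
        · obtain ⟨m, hm⟩ := exists_pow_lt_of_lt_one (div_pos hdpos h0) hρ1
          refine ⟨m, ?_⟩
          rw [lt_div_iff₀ h0] at hm
          linarith [hm]
      obtain ⟨x', hx', y', hy', hc', hdir'⟩ := descent m x hx y hy hm
      exact ⟨(x', y'), ⟨Set.mk_mem_prod hx' hy', hc'⟩, hdir'⟩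
    · rintro ⟨⟨x, y⟩, ⟨⟨hx, hy⟩, hcd⟩, rfl⟩
      refine ⟨x, hx, y, hy, ?_, rfl⟩
      intro h
      simp only [Set.mem_setOf_eq, h, dist_self] at hcd
      linarith
  rw [himg]
  exact (hTc.image_of_continuousOn hfcont).isClosed
end

section
/- Let K ⊂ ℝⁿ be a compact set with Hausdorff dimension greater than 1, and suppose the set D of unit direction vectors (x−y)/‖x−y‖ for distinct x, y ∈ K is closed. Then for every unit vector v ∈ S^{n−1} there exist distinct x, y ∈ K with ⟨x − y, v⟩ = 0. -/
open Set

theorem stmt17 (n : ℕ) (K : Set (EuclideanSpace ℝ (Fin n))) (hK : IsCompact K)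
    (hdim : 1 < dimH K)
    (hD : IsClosed {d : EuclideanSpace ℝ (Fin n) |
      ∃ x ∈ K, ∃ y ∈ K, x ≠ y ∧ d = ‖x - y‖⁻¹ • (x - y)}) :
    ∀ v : EuclideanSpace ℝ (Fin n), ‖v‖ = 1 →
      ∃ x ∈ K, ∃ y ∈ K, x ≠ y ∧ inner ℝ (x - y) v = (0 : ℝ) := by
  intro v hv
  by_contra hcon
  push_neg at hcon
  set D : Set (EuclideanSpace ℝ (Fin n)) :=
    {d | ∃ x ∈ K, ∃ y ∈ K, x ≠ y ∧ d = ‖x - y‖⁻¹ • (x - y)} with hDdef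
  -- D is compact (closed and contained in unit sphere)
  have hDsub : D ⊆ Metric.sphere 0 1 := by
    rintro d ⟨x, hx, y, hy, hxy, rfl⟩
    have hne : x - y ≠ 0 := sub_ne_zero.mpr hxy
    simp [norm_smul, norm_inv, inv_mul_cancel₀ (norm_ne_zero_iff.mpr hne)]
  have hDcomp : IsCompact D :=
    (isCompact_sphere (0 : EuclideanSpace ℝ (Fin n)) 1).of_isClosed_subset hD hDsub
  -- positive lower bound on |⟨d, v⟩| over D
  have hpos : ∀ d ∈ D, 0 < |(inner ℝ d v : ℝ)| := by
    rintro d ⟨x, hx, y, hy, hxy, rfl⟩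
    have hne : x - y ≠ 0 := sub_ne_zero.mpr hxy
    have : (inner ℝ (‖x - y‖⁻¹ • (x - y)) v : ℝ) = ‖x - y‖⁻¹ * inner ℝ (x - y) v := by
      rw [inner_smul_left]; norm_num
    rw [this]
    have h1 : (inner ℝ (x - y) v : ℝ) ≠ 0 := hcon x hx y hy hxy
    have h2 : ‖x - y‖⁻¹ ≠ 0 := inv_ne_zero (norm_ne_zero_iff.mpr hne)
    positivity
  obtain ⟨c, hc0, hcle⟩ : ∃ c : ℝ, 0 < c ∧ ∀ d ∈ D, c ≤ |(inner ℝ d v : ℝ)| := by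
    rcases D.eq_empty_or_nonempty with h | h
    · exact ⟨1, one_pos, by simp [h]⟩
    · obtain ⟨d₀, hd₀, hmin⟩ := hDcomp.exists_isMinOn (f := fun d => |(inner ℝ d v : ℝ)|) h
        (Continuous.continuousOn ((continuous_id.inner continuous_const).abs))
      exact ⟨|inner ℝ d₀ v|, hpos d₀ hd₀, fun d hd => hmin hd⟩
  -- key estimate on K
  have key : ∀ x ∈ K, ∀ y ∈ K, c * dist x y ≤ |(inner ℝ (x - y) v : ℝ)| := by
    intro x hx y hy
    rcases eq_or_ne x y with rfl | hxy
    · simp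
    · have hne : x - y ≠ 0 := sub_ne_zero.mpr hxy
      have hd : (‖x - y‖⁻¹ • (x - y)) ∈ D := ⟨x, hx, y, hy, hxy, rfl⟩
      have := hcle _ hd
      have heq : (inner ℝ (‖x - y‖⁻¹ • (x - y)) v : ℝ) = ‖x - y‖⁻¹ * inner ℝ (x - y) v := by
        rw [inner_smul_left]; norm_num
      rw [heq, abs_mul, abs_inv, abs_norm] at this
      have hn : (0:ℝ) < ‖x - y‖ := norm_pos_iff.mpr hne
      rw [dist_eq_norm]
      calc c * ‖x - y‖ ≤ (‖x - y‖⁻¹ * |inner ℝ (x - y) v|) * ‖x - y‖ := by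
            exact mul_le_mul_of_nonneg_right this hn.le
        _ = |inner ℝ (x - y) v| := by field_simp
  -- the map g : K → ℝ is antilipschitz
  set g : K → ℝ := fun x => inner ℝ (x : EuclideanSpace ℝ (Fin n)) v with hg
  set cN : NNReal := ⟨c, hc0.le⟩ with hcN
  have hanti : AntilipschitzWith cN⁻¹ g := by
    apply AntilipschitzWith.of_le_mul_dist
    intro x y
    have hdg : dist (g x) (g y) = |(inner ℝ ((x : EuclideanSpace ℝ (Fin n)) - y) v : ℝ)| := by
      rw [Real.dist_eq, hg]
      simp [inner_sub_left]
    have hkey := key x x.2 y y.2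
    have hcoe : ((cN⁻¹ : NNReal) : ℝ) = c⁻¹ := by rw [NNReal.coe_inv]; rfl
    rw [hdg, hcoe]
    have hdxy : dist x y = dist (x : EuclideanSpace ℝ (Fin n)) y := rfl
    rw [hdxy, inv_mul_eq_div, le_div_iff₀ hc0, mul_comm]
    exact hkey
  -- dimension argument
  have h1 : dimH K = dimH (univ : Set K) := by
    rw [← isometry_subtype_coe.dimH_image (univ : Set K), image_univ, Subtype.range_coe]
  have h2 : dimH (univ : Set K) ≤ dimH (g '' univ) := hanti.le_dimH_image univ
  have h3 : dimH (g '' univ) ≤ dimH (univ : Set ℝ) := dimH_mono (subset_univ _)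
  rw [Real.dimH_univ] at h3
  exact absurd ((h1 ▸ h2.trans h3)) (not_le.mpr hdim)
end
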